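/- Let H be an infinite dimensional quasi-Hopf algebra with bijective antipode. Then ∫ₗ = ∫ᵣ = 0. -/

import Mathlib

set_option autoImplicit false

open TensorProduct

/-- A quasi-bialgebra in the sense of Drinfeld. The reassociator `Phi` lives in
`H ⊗ (H ⊗ H)`, and `(Δ ⊗ id)` is transported along the associator. -/
structure QuasiBialgebra (k H : Type*) [Field k] [Ring H] [Algebra k H] where
  comul : H →ₐ[k] H ⊗[k] H
  counit : H →ₐ[k] k
  Phi : H ⊗[k] (H ⊗[k] H)
  PhiInv : H ⊗[k] (H ⊗[k] H)
  Phi_invertible : Phi * PhiInv = 1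
  invertible_Phi : PhiInv * Phi = 1
  quasi_coassoc : ∀ h : H,
    (Algebra.TensorProduct.map (AlgHom.id k H) comul) (comul h) * Phi
      = Phi * (Algebra.TensorProduct.assoc k k k H H H)
          ((Algebra.TensorProduct.map comul (AlgHom.id k H)) (comul h))
  counit_right : ∀ h : H,
    (Algebra.TensorProduct.map (AlgHom.id k H) counit) (comul h) = h ⊗ₜ[k] 1
  counit_left : ∀ h : H,
    (Algebra.TensorProduct.map counit (AlgHom.id k H)) (comul h) = 1 ⊗ₜ[k] h
  pentagon :
    (1 ⊗ₜ[k] Phi)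
      * (Algebra.TensorProduct.map (AlgHom.id k H)
          ((Algebra.TensorProduct.assoc k k k H H H).toAlgHom.comp
            (Algebra.TensorProduct.map comul (AlgHom.id k H)))) Phi
      * (Algebra.TensorProduct.map (AlgHom.id k H)
            (Algebra.TensorProduct.assoc k k k H H H).toAlgHom)
          ((Algebra.TensorProduct.assoc k k k H (H ⊗[k] H) H) (Phi ⊗ₜ[k] 1))
    = (Algebra.TensorProduct.map (AlgHom.id k H)
        (Algebra.TensorProduct.map (AlgHom.id k H) comul)) Phi
      * (Algebra.TensorProduct.assoc k k k H H (H ⊗[k] H))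
          ((Algebra.TensorProduct.map comul (AlgHom.id k (H ⊗[k] H))) Phi)
  counit_mid_Phi :
    (Algebra.TensorProduct.map (AlgHom.id k H)
      (Algebra.TensorProduct.map counit (AlgHom.id k H))) Phi = 1

/-- A quasi-Hopf algebra: a quasi-bialgebra with an algebra anti-homomorphism `S`
and elements `alpha`, `beta` satisfying Drinfeld's antipode axioms.  Bijectivity
of `S` is *not* assumed. -/
structure QuasiHopfAlgebra (k H : Type*) [Field k] [Ring H] [Algebra k H] extends
    QuasiBialgebra k H where
  S : H →ₗ[k] H
  alpha : H
  beta : H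
  S_one : S 1 = 1
  S_mul : ∀ a b : H, S (a * b) = S b * S a
  antipode_left : ∀ h : H,
    (LinearMap.mul' k H)
      ((TensorProduct.map ((LinearMap.mulRight k alpha) ∘ₗ S) LinearMap.id) (comul h))
      = counit h • alpha
  antipode_right : ∀ h : H,
    (LinearMap.mul' k H)
      ((TensorProduct.map LinearMap.id ((LinearMap.mulLeft k beta) ∘ₗ S)) (comul h))
      = counit h • beta
  antipode_Phi :
    (LinearMap.mul' k H)
      ((TensorProduct.map LinearMap.id
        ((LinearMap.mul' k H) ∘ₗ (TensorProduct.map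
          ((LinearMap.mulRight k alpha) ∘ₗ ((LinearMap.mulLeft k beta) ∘ₗ S))
          LinearMap.id))) Phi) = 1
  antipode_PhiInv :
    (LinearMap.mul' k H)
      ((TensorProduct.map ((LinearMap.mulRight k alpha) ∘ₗ S)
        ((LinearMap.mul' k H) ∘ₗ (TensorProduct.map (LinearMap.mulRight k beta) S)))
        PhiInv) = 1

namespace QuasiHopfAlgebra

variable {k H : Type*} [Field k] [Ring H] [Algebra k H] (Q : QuasiHopfAlgebra k H)

/-- The space of left integrals in `H`. -/
def leftIntegrals : Submodule k H where
  carrier := {t | ∀ h : H, h * t = Q.counit h • t}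
  add_mem' := by intro a b ha hb h; rw [mul_add, ha h, hb h, smul_add]
  zero_mem' := by intro h; simp
  smul_mem' := by intro c x hx h; rw [mul_smul_comm, hx h, smul_comm]

/-- The space of right integrals in `H`. -/
def rightIntegrals : Submodule k H where
  carrier := {t | ∀ h : H, t * h = Q.counit h • t}
  add_mem' := by intro a b ha hb h; rw [add_mul, ha h, hb h, smul_add]
  zero_mem' := by intro h; simp
  smul_mem' := by intro c x hx h; rw [smul_mul_assoc, hx h, smul_comm]

/-- The element `p_R = ∑ x¹ ⊗ x² β S(x³)`. -/
noncomputable def pR : H ⊗[k] H :=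
  (TensorProduct.map LinearMap.id
    ((LinearMap.mul' k H) ∘ₗ (TensorProduct.map (LinearMap.mulRight k Q.beta) Q.S)))
    Q.PhiInv

/-- The element `∑ X¹ t₁ ⊗ S(X² t₂) α X³` built from a (left integral) `t`. -/
noncomputable def Tel (t : H) : H ⊗[k] H :=
  (TensorProduct.map LinearMap.id
    ((LinearMap.mul' k H) ∘ₗ
      (TensorProduct.map ((LinearMap.mulRight k Q.alpha) ∘ₗ Q.S) LinearMap.id)))
    (Q.Phi * (Algebra.TensorProduct.assoc k k k H H H) (Q.comul t ⊗ₜ[k] 1))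

end QuasiHopfAlgebra

noncomputable section QHLemmas
open TensorProduct LinearMap

variable {k H : Type*} [Field k] [Ring H] [Algebra k H]

theorem tmul_mul_eq {A B : Type*} [Ring A] [Algebra k A] [Ring B] [Algebra k B]
    (x : A) (y : B) (u : A ⊗[k] B) :
    (x ⊗ₜ[k] y) * u = TensorProduct.map (mulLeft k x) (mulLeft k y) u := by
  induction u using TensorProduct.induction_on with
  | zero => simp
  | tmul a b => simp [Algebra.TensorProduct.tmul_mul_tmul]
  | add a b ha hb => simp [mul_add, ha, hb]

theorem mul_tmul_eq {A B : Type*} [Ring A] [Algebra k A] [Ring B] [Algebra k B]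
    (x : A) (y : B) (u : A ⊗[k] B) :
    u * (x ⊗ₜ[k] y) = TensorProduct.map (mulRight k x) (mulRight k y) u := by
  induction u using TensorProduct.induction_on with
  | zero => simp
  | tmul a b => simp [Algebra.TensorProduct.tmul_mul_tmul]
  | add a b ha hb => simp [add_mul, ha, hb]

theorem algMap_apply {A B C D : Type*} [Ring A] [Algebra k A] [Ring B] [Algebra k B]
    [Ring C] [Algebra k C] [Ring D] [Algebra k D]
    (f : A →ₐ[k] B) (g : C →ₐ[k] D) (u : A ⊗[k] C) :
    Algebra.TensorProduct.map f g u = TensorProduct.map f.toLinearMap g.toLinearMap u := by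
  induction u using TensorProduct.induction_on with
  | zero => simp
  | tmul a b => simp
  | add a b ha hb => simp [ha, hb]

end QHLemmas
set_option maxHeartbeats 1000000
set_option synthInstance.maxHeartbeats 400000


section A4Helpers
variable {k H : Type*} [Field k] [Ring H] [Algebra k H]

noncomputable instance A4RightDistrib :
    RightDistribClass (H ⊗[k] (H ⊗[k] (H ⊗[k] H))) :=
  ⟨fun a b c => Distrib.right_distrib a b c⟩

noncomputable instance A4LeftDistrib :
    LeftDistribClass (H ⊗[k] (H ⊗[k] (H ⊗[k] H))) :=
  ⟨fun a b c => Distrib.left_distrib a b c⟩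

@[simp] lemma A4_zero_mul (κ : H ⊗[k] (H ⊗[k] (H ⊗[k] H))) :
    (0 : H ⊗[k] (H ⊗[k] (H ⊗[k] H))) * κ = 0 := zero_mul κ

@[simp] lemma A4_mul_zero (κ : H ⊗[k] (H ⊗[k] (H ⊗[k] H))) :
    κ * (0 : H ⊗[k] (H ⊗[k] (H ⊗[k] H))) = 0 := mul_zero κ

@[simp] lemma A4_one_mul (κ : H ⊗[k] (H ⊗[k] (H ⊗[k] H))) :
    (1 : H ⊗[k] (H ⊗[k] (H ⊗[k] H))) * κ = κ := one_mul κ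

lemma A4_add_mul (u v κ : H ⊗[k] (H ⊗[k] (H ⊗[k] H))) :
    (u + v) * κ = u * κ + v * κ := add_mul u v κ

lemma A4_mul_add (κ u v : H ⊗[k] (H ⊗[k] (H ⊗[k] H))) :
    κ * (u + v) = κ * u + κ * v := mul_add κ u v

end A4Helpers

namespace QuasiHopfAlgebra
variable {k H : Type*} [Field k] [Ring H] [Algebra k H] (Q : QuasiHopfAlgebra k H)

/-- `b ⊗ c ↦ S(b) α c`. -/
noncomputable def Gsa : H ⊗[k] H →ₗ[k] H :=
  TensorProduct.lift (LinearMap.mk₂ k (fun b c => Q.S b * Q.alpha * c)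
    (fun b b' c => by simp [map_add, add_mul])
    (fun r b c => by simp [map_smul, smul_mul_assoc])
    (fun b c c' => by simp [mul_add])
    (fun r b c => by simp [mul_smul_comm]))

@[simp] lemma Gsa_tmul (b c : H) : Q.Gsa (b ⊗ₜ[k] c) = Q.S b * Q.alpha * c := rfl

/-- `b ⊗ c ↦ b β S(c)`. -/
noncomputable def Gb : H ⊗[k] H →ₗ[k] H :=
  TensorProduct.lift (LinearMap.mk₂ k (fun b c => b * Q.beta * Q.S c)
    (fun b b' c => by simp [add_mul])
    (fun r b c => by simp [smul_mul_assoc])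
    (fun b c c' => by simp [map_add, mul_add])
    (fun r b c => by simp [map_smul, mul_smul_comm]))

@[simp] lemma Gb_tmul (b c : H) : Q.Gb (b ⊗ₜ[k] c) = b * Q.beta * Q.S c := rfl

/-- `b ⊗ (c ⊗ d) ↦ b β S(c) α d`. -/
noncomputable def Gin : H ⊗[k] (H ⊗[k] H) →ₗ[k] H :=
  TensorProduct.lift (LinearMap.mk₂ k (fun b w => b * Q.beta * Q.Gsa w)
    (fun b b' c => by simp [add_mul])
    (fun r b c => by simp [smul_mul_assoc])
    (fun b c c' => by simp [map_add, mul_add])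
    (fun r b c => by simp [map_smul, mul_smul_comm]))

@[simp] lemma Gin_tmul (b : H) (w : H ⊗[k] H) :
    Q.Gin (b ⊗ₜ[k] w) = b * Q.beta * Q.Gsa w := rfl

/-- `b ⊗ c ↦ ε(c) • b`. -/
noncomputable def th : H ⊗[k] H →ₗ[k] H :=
  TensorProduct.lift (LinearMap.mk₂ k (fun b c => Q.counit c • b)
    (fun b b' c => by simp [smul_add])
    (fun r b c => by simp [smul_comm r])
    (fun b c c' => by simp [map_add, add_smul])
    (fun r b c => by simp [map_smul, smul_smul, mul_comm]))

@[simp] lemma th_tmul (b c : H) : Q.th (b ⊗ₜ[k] c) = Q.counit c • b := rfl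

/-- `g ⊗ x ↦ Δ(g) · p_R · (1 ⊗ S(x))`. -/
noncomputable def Mm : H ⊗[k] H →ₗ[k] H ⊗[k] H :=
  TensorProduct.lift (LinearMap.mk₂ k
    (fun g x => Q.comul g * Q.pR * ((1:H) ⊗ₜ[k] Q.S x))
    (fun b b' c => by simp [map_add, add_mul])
    (fun r b c => by simp [map_smul, smul_mul_assoc])
    (fun b c c' => by simp [map_add, tmul_add, mul_add])
    (fun r b c => by simp [map_smul, tmul_smul, mul_smul_comm]))

@[simp] lemma Mm_tmul (g x : H) :
    Q.Mm (g ⊗ₜ[k] x) = Q.comul g * Q.pR * ((1:H) ⊗ₜ[k] Q.S x) := rfl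

end QuasiHopfAlgebra
namespace QuasiHopfAlgebra
variable {k H : Type*} [Field k] [Ring H] [Algebra k H] (Q : QuasiHopfAlgebra k H)

/-- `b ⊗ c ↦ ε(c) • b` as an algebra map. -/
noncomputable def tha : H ⊗[k] H →ₐ[k] H :=
  Algebra.TensorProduct.lift (AlgHom.id k H) ((Algebra.ofId k H).comp Q.counit)
    (fun x y => (Algebra.commutes (Q.counit y) x).symm)

@[simp] lemma tha_tmul (b c : H) : Q.tha (b ⊗ₜ[k] c) = Q.counit c • b := by
  show (AlgHom.id k H) b * ((Algebra.ofId k H).comp Q.counit) c = _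
  simp [tha, Algebra.TensorProduct.lift_tmul, Algebra.ofId_apply,
    ← Algebra.commutes (Q.counit c) b, ← Algebra.smul_def]

/-- `b ⊗ c ↦ ε(b)ε(c)`. -/
noncomputable def eea : H ⊗[k] H →ₐ[k] k :=
  Algebra.TensorProduct.lift Q.counit Q.counit (fun x y => Commute.all _ _)

@[simp] lemma eea_tmul (b c : H) : Q.eea (b ⊗ₜ[k] c) = Q.counit b * Q.counit c := by
  simp [eea, Algebra.TensorProduct.lift_tmul]

/-- `a ⊗ w ↦ (ε⊗ε)(w) • a` as an algebra map. -/
noncomputable def psa : H ⊗[k] (H ⊗[k] H) →ₐ[k] H :=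
  Algebra.TensorProduct.lift (AlgHom.id k H) ((Algebra.ofId k H).comp Q.eea)
    (fun x y => (Algebra.commutes (Q.eea y) x).symm)

@[simp] lemma psa_tmul (a : H) (w : H ⊗[k] H) : Q.psa (a ⊗ₜ[k] w) = Q.eea w • a := by
  show (AlgHom.id k H) a * ((Algebra.ofId k H).comp Q.eea) w = _
  simp [psa, Algebra.TensorProduct.lift_tmul, Algebra.ofId_apply,
    ← Algebra.commutes (Q.eea w) a, ← Algebra.smul_def]

lemma th_comul (x : H) : Q.th (Q.comul x) = x := by
  have h1 : Q.th = (TensorProduct.rid k H).toLinearMap ∘ₗ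
      TensorProduct.map LinearMap.id Q.counit.toLinearMap := by
    apply TensorProduct.ext'
    intro b c
    simp
  have h2 := Q.counit_right x
  rw [algMap_apply] at h2
  have h3 : (AlgHom.id k H).toLinearMap = LinearMap.id := rfl
  rw [h3] at h2
  rw [h1]
  simp only [LinearMap.comp_apply]
  rw [h2]
  simp

lemma Gsa_comul (x : H) : Q.Gsa (Q.comul x) = Q.counit x • Q.alpha := by
  have h1 : Q.Gsa = (LinearMap.mul' k H) ∘ₗ
      TensorProduct.map ((LinearMap.mulRight k Q.alpha) ∘ₗ Q.S) LinearMap.id := by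
    apply TensorProduct.ext'
    intro b c
    simp
  rw [h1, LinearMap.comp_apply, Q.antipode_left]

lemma Gb_comul (x : H) : Q.Gb (Q.comul x) = Q.counit x • Q.beta := by
  have h1 : Q.Gb = (LinearMap.mul' k H) ∘ₗ
      TensorProduct.map LinearMap.id ((LinearMap.mulLeft k Q.beta) ∘ₗ Q.S) := by
    apply TensorProduct.ext'
    intro b c
    simp [mul_assoc]
  rw [h1, LinearMap.comp_apply, Q.antipode_right]

lemma Gin_Phi : Q.Gin Q.Phi = 1 := by
  have h1 : Q.Gin = (LinearMap.mul' k H) ∘ₗ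
      (TensorProduct.map LinearMap.id
        ((LinearMap.mul' k H) ∘ₗ (TensorProduct.map
          ((LinearMap.mulRight k Q.alpha) ∘ₗ ((LinearMap.mulLeft k Q.beta) ∘ₗ Q.S))
          LinearMap.id))) := by
    apply TensorProduct.ext'
    intro b w
    induction w using TensorProduct.induction_on with
    | zero => simp
    | tmul c d => simp [mul_assoc]
    | add u v hu hv =>
      simp only [tmul_add, map_add, hu, hv]
  rw [h1, LinearMap.comp_apply, Q.antipode_Phi]

lemma pR_eq : Q.pR = TensorProduct.map LinearMap.id Q.Gb Q.PhiInv := by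
  rw [pR]
  congr 1
  apply TensorProduct.ext'
  intro b w
  induction w using TensorProduct.induction_on with
  | zero => simp
  | tmul c d => simp
  | add u v hu hv => simp only [tmul_add, map_add, hu, hv]

lemma Tel_eq (t : H) :
    Q.Tel t = TensorProduct.map LinearMap.id Q.Gsa
      (Q.Phi * (Algebra.TensorProduct.assoc k k k H H H) (Q.comul t ⊗ₜ[k] 1)) := by
  rw [Tel]
  congr 1
  apply TensorProduct.ext'
  intro b w
  induction w using TensorProduct.induction_on with
  | zero => simp
  | tmul c d => simp
  | add u v hu hv => simp only [tmul_add, map_add, hu, hv]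

end QuasiHopfAlgebra
namespace QuasiHopfAlgebra
variable {k H : Type*} [Field k] [Ring H] [Algebra k H] (Q : QuasiHopfAlgebra k H)

lemma Gsa_mul_pure (e : H ⊗[k] H) (r s : H) :
    Q.Gsa (e * (r ⊗ₜ[k] s)) = Q.S r * Q.Gsa e * s := by
  induction e using TensorProduct.induction_on with
  | zero => simp
  | tmul b c => simp [Algebra.TensorProduct.tmul_mul_tmul, Q.S_mul, mul_assoc]
  | add u v hu hv => simp [add_mul, hu, hv, mul_add]

lemma Gsa_comul_mul (z : H) (e : H ⊗[k] H) :
    Q.Gsa (Q.comul z * e) = Q.counit z • Q.Gsa e := by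
  induction e using TensorProduct.induction_on with
  | zero => simp
  | tmul r s =>
    rw [Gsa_mul_pure, Q.Gsa_comul]
    simp [mul_smul_comm, smul_mul_assoc]
  | add u v hu hv => simp [mul_add, hu, hv]

lemma Gb_tmul_mul (y z : H) (u : H ⊗[k] H) :
    Q.Gb ((y ⊗ₜ[k] z) * u) = y * Q.Gb u * Q.S z := by
  induction u using TensorProduct.induction_on with
  | zero => simp
  | tmul r s => simp [Algebra.TensorProduct.tmul_mul_tmul, Q.S_mul, mul_assoc]
  | add u v hu hv => simp [mul_add, hu, hv, add_mul]

lemma Gb_mul_comul (w : H ⊗[k] H) (e : H) :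
    Q.Gb (w * Q.comul e) = Q.counit e • Q.Gb w := by
  induction w using TensorProduct.induction_on with
  | zero => simp
  | tmul y z =>
    rw [Gb_tmul_mul, Q.Gb_comul]
    simp [mul_smul_comm, smul_mul_assoc]
  | add u v hu hv => simp [add_mul, hu, hv]

section Integral
variable {t : H}

lemma int_comul_mul (ht : ∀ h : H, h * t = Q.counit h • t) (h : H) : Q.comul h * (t ⊗ₜ[k] (1:H)) = t ⊗ₜ[k] h := by
  rw [mul_tmul_eq]
  have h1 : LinearMap.mulRight k t =
      (LinearMap.toSpanSingleton k H t) ∘ₗ Q.counit.toLinearMap := by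
    apply LinearMap.ext
    intro x
    simp [ht x]
  have h2 : LinearMap.mulRight k (1:H) = (LinearMap.id : H →ₗ[k] H) := by
    apply LinearMap.ext; intro x; simp
  rw [h1, h2]
  have h3 : TensorProduct.map ((LinearMap.toSpanSingleton k H t) ∘ₗ Q.counit.toLinearMap)
      (LinearMap.id : H →ₗ[k] H)
      = (TensorProduct.map (LinearMap.toSpanSingleton k H t) LinearMap.id) ∘ₗ
        (TensorProduct.map Q.counit.toLinearMap LinearMap.id) := by
    rw [← TensorProduct.map_comp]
    rfl
  rw [h3]
  have h4 := Q.counit_left h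
  rw [algMap_apply] at h4
  have h5 : (AlgHom.id k H).toLinearMap = (LinearMap.id : H →ₗ[k] H) := rfl
  rw [h5] at h4
  simp only [LinearMap.comp_apply]
  rw [h4]
  simp

lemma L1_step1 (h : H) (v : H ⊗[k] (H ⊗[k] H)) :
    TensorProduct.map LinearMap.id Q.Gsa
      ((Algebra.TensorProduct.map (AlgHom.id k H) Q.comul) (Q.comul h) * v)
    = (h ⊗ₜ[k] (1:H)) * (TensorProduct.map LinearMap.id Q.Gsa v) := by
  induction v using TensorProduct.induction_on with
  | zero => simp
  | tmul a w =>
    rw [mul_tmul_eq]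
    rw [algMap_apply]
    have h5 : (AlgHom.id k H).toLinearMap = (LinearMap.id : H →ₗ[k] H) := rfl
    rw [h5]
    rw [← LinearMap.comp_apply, ← TensorProduct.map_comp,
        ← LinearMap.comp_apply, ← TensorProduct.map_comp]
    have hinner : (Q.Gsa ∘ₗ (LinearMap.mulRight k w)) ∘ₗ Q.comul.toLinearMap
        = (LinearMap.toSpanSingleton k H (Q.Gsa w)) ∘ₗ Q.counit.toLinearMap := by
      apply LinearMap.ext
      intro g
      simp [Gsa_comul_mul]
    simp only [LinearMap.id_comp, LinearMap.comp_id]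
    rw [hinner]
    have hsplit : TensorProduct.map (LinearMap.mulRight k a)
        ((LinearMap.toSpanSingleton k H (Q.Gsa w)) ∘ₗ Q.counit.toLinearMap)
        = (TensorProduct.map (LinearMap.mulRight k a)
            (LinearMap.toSpanSingleton k H (Q.Gsa w))) ∘ₗ
          (TensorProduct.map LinearMap.id Q.counit.toLinearMap) := by
      rw [← TensorProduct.map_comp]
      rfl
    rw [hsplit]
    have h4 := Q.counit_right h
    rw [algMap_apply] at h4
    rw [h5] at h4
    simp only [LinearMap.comp_apply]
    rw [h4]
    simp [Algebra.TensorProduct.tmul_mul_tmul]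
  | add u v hu hv => simp only [mul_add, map_add, hu, hv]

lemma L1_step2 (v : H ⊗[k] (H ⊗[k] H)) (c : H) :
    TensorProduct.map LinearMap.id Q.Gsa (v * ((1:H) ⊗ₜ[k] ((1:H) ⊗ₜ[k] c)))
    = (TensorProduct.map LinearMap.id Q.Gsa v) * ((1:H) ⊗ₜ[k] c) := by
  induction v using TensorProduct.induction_on with
  | zero => simp
  | tmul a w =>
    simp only [Algebra.TensorProduct.tmul_mul_tmul, TensorProduct.map_tmul, mul_one,
      LinearMap.id_apply]
    rw [Gsa_mul_pure]
    simp [Q.S_one]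
  | add u v hu hv => simp only [add_mul, map_add, hu, hv]

lemma L1 (ht : ∀ h : H, h * t = Q.counit h • t) (h : H) :
    (h ⊗ₜ[k] (1:H)) * Q.Tel t = Q.Tel t * ((1:H) ⊗ₜ[k] h) := by
  rw [Tel_eq]
  rw [← L1_step1]
  rw [← mul_assoc, Q.quasi_coassoc, mul_assoc]
  have key : (Algebra.TensorProduct.assoc k k k H H H)
        ((Algebra.TensorProduct.map Q.comul (AlgHom.id k H)) (Q.comul h))
      * (Algebra.TensorProduct.assoc k k k H H H) (Q.comul t ⊗ₜ[k] (1:H))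
      = (Algebra.TensorProduct.assoc k k k H H H) (Q.comul t ⊗ₜ[k] (1:H))
        * ((1:H) ⊗ₜ[k] ((1:H) ⊗ₜ[k] h)) := by
    rw [← map_mul]
    have e1 : Q.comul t ⊗ₜ[k] (1:H)
        = (Algebra.TensorProduct.map Q.comul (AlgHom.id k H)) (t ⊗ₜ[k] (1:H)) := by
      simp
    rw [e1, ← map_mul, int_comul_mul Q ht]
    have e2 : (Algebra.TensorProduct.map Q.comul (AlgHom.id k H)) (t ⊗ₜ[k] h)
        = (Q.comul t ⊗ₜ[k] (1:H)) * ((1:(H ⊗[k] H)) ⊗ₜ[k] h) := by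
      simp [Algebra.TensorProduct.tmul_mul_tmul]
    rw [e2, map_mul]
    congr 1
  rw [key, ← mul_assoc, L1_step2]

end Integral
end QuasiHopfAlgebra
namespace QuasiHopfAlgebra
variable {k H : Type*} [Field k] [Ring H] [Algebra k H] (Q : QuasiHopfAlgebra k H)

lemma R1_CL (e : H ⊗[k] H) (v : H ⊗[k] (H ⊗[k] H)) (b : H) :
    e * (TensorProduct.map LinearMap.id Q.Gb v) * ((1:H) ⊗ₜ[k] Q.S b)
    = TensorProduct.map LinearMap.id Q.Gb
        ((Algebra.TensorProduct.assoc k k k H H H) (e ⊗ₜ[k] b) * v) := by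
  induction e using TensorProduct.induction_on with
  | zero => simp
  | tmul p q =>
    rw [Algebra.TensorProduct.assoc_tmul]
    induction v using TensorProduct.induction_on with
    | zero => simp
    | tmul x w =>
      simp only [TensorProduct.map_tmul, LinearMap.id_apply,
        Algebra.TensorProduct.tmul_mul_tmul]
      rw [Gb_tmul_mul]
      simp [mul_assoc]
    | add u v hu hv => simp only [mul_add, map_add, hu, hv, add_mul]
  | add u v hu hv =>
    simp only [add_mul, map_add, hu, hv, TensorProduct.add_tmul, mul_add]

lemma Mm_eq (u : H ⊗[k] H) :
    Q.Mm u = TensorProduct.map LinearMap.id Q.Gb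
      ((Algebra.TensorProduct.assoc k k k H H H)
          ((Algebra.TensorProduct.map Q.comul (AlgHom.id k H)) u) * Q.PhiInv) := by
  induction u using TensorProduct.induction_on with
  | zero => simp
  | tmul a b =>
    rw [Mm_tmul, pR_eq, Algebra.TensorProduct.map_tmul, R1_CL]
    rfl
  | add u v hu hv => simp only [map_add, hu, hv, add_mul]

lemma QAinv (h : H) :
    (Algebra.TensorProduct.assoc k k k H H H)
        ((Algebra.TensorProduct.map Q.comul (AlgHom.id k H)) (Q.comul h)) * Q.PhiInv
    = Q.PhiInv * (Algebra.TensorProduct.map (AlgHom.id k H) Q.comul) (Q.comul h) := by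
  have hq := Q.quasi_coassoc h
  calc (Algebra.TensorProduct.assoc k k k H H H)
        ((Algebra.TensorProduct.map Q.comul (AlgHom.id k H)) (Q.comul h)) * Q.PhiInv
      = Q.PhiInv * (Q.Phi * (Algebra.TensorProduct.assoc k k k H H H)
        ((Algebra.TensorProduct.map Q.comul (AlgHom.id k H)) (Q.comul h)) * Q.PhiInv) := by
        rw [← mul_assoc, ← mul_assoc, Q.invertible_Phi, one_mul]
    _ = Q.PhiInv * ((Algebra.TensorProduct.map (AlgHom.id k H) Q.comul) (Q.comul h)
          * Q.Phi * Q.PhiInv) := by rw [hq]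
    _ = Q.PhiInv * (Algebra.TensorProduct.map (AlgHom.id k H) Q.comul) (Q.comul h) := by
        rw [mul_assoc ((Algebra.TensorProduct.map (AlgHom.id k H) Q.comul) (Q.comul h)),
          Q.Phi_invertible, mul_one]

lemma R1_CL2 (v : H ⊗[k] (H ⊗[k] H)) (g : H) :
    TensorProduct.map LinearMap.id Q.Gb
      (v * (Algebra.TensorProduct.map (AlgHom.id k H) Q.comul) (Q.comul g))
    = (TensorProduct.map LinearMap.id Q.Gb v) * (g ⊗ₜ[k] (1:H)) := by
  induction v using TensorProduct.induction_on with
  | zero => simp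
  | tmul x w =>
    rw [tmul_mul_eq, algMap_apply]
    have h5 : (AlgHom.id k H).toLinearMap = (LinearMap.id : H →ₗ[k] H) := rfl
    rw [h5, ← LinearMap.comp_apply, ← TensorProduct.map_comp,
      ← LinearMap.comp_apply, ← TensorProduct.map_comp]
    simp only [LinearMap.id_comp, LinearMap.comp_id]
    have hinner : (Q.Gb ∘ₗ (LinearMap.mulLeft k w)) ∘ₗ Q.comul.toLinearMap
        = (LinearMap.toSpanSingleton k H (Q.Gb w)) ∘ₗ Q.counit.toLinearMap := by
      apply LinearMap.ext
      intro g'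
      simp [Gb_mul_comul]
    rw [hinner]
    have hsplit : TensorProduct.map (LinearMap.mulLeft k x)
        ((LinearMap.toSpanSingleton k H (Q.Gb w)) ∘ₗ Q.counit.toLinearMap)
        = (TensorProduct.map (LinearMap.mulLeft k x)
            (LinearMap.toSpanSingleton k H (Q.Gb w))) ∘ₗ
          (TensorProduct.map LinearMap.id Q.counit.toLinearMap) := by
      rw [← TensorProduct.map_comp]
      rfl
    rw [hsplit]
    have h4 := Q.counit_right g
    rw [algMap_apply, h5] at h4
    simp only [LinearMap.comp_apply]
    rw [h4]
    simp [Algebra.TensorProduct.tmul_mul_tmul]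
  | add u v hu hv => simp only [add_mul, map_add, hu, hv]

lemma R1 (g : H) : Q.Mm (Q.comul g) = Q.pR * (g ⊗ₜ[k] (1:H)) := by
  rw [Mm_eq, QAinv, R1_CL2, pR_eq]

end QuasiHopfAlgebra
namespace QuasiHopfAlgebra
variable {k H : Type*} [Field k] [Ring H] [Algebra k H] (Q : QuasiHopfAlgebra k H)

lemma tha_eq_th (u : H ⊗[k] H) : Q.tha u = Q.th u := by
  induction u using TensorProduct.induction_on with
  | zero => simp
  | tmul b c => simp
  | add u v hu hv => simp [hu, hv]

lemma eea_eq (u : H ⊗[k] H) : Q.eea u = Q.counit (Q.tha u) := by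
  induction u using TensorProduct.induction_on with
  | zero => simp
  | tmul b c => simp [mul_comm]
  | add u v hu hv => simp [hu, hv]

lemma eea_comul (x : H) : Q.eea (Q.comul x) = Q.counit x := by
  rw [eea_eq, tha_eq_th, th_comul]

/-- The counit auxiliary map `k ⊗ H → k`. -/
noncomputable def tau : k ⊗[k] H →ₗ[k] k :=
  TensorProduct.lift (LinearMap.mk₂ k (fun c x => c * Q.counit x)
    (fun b b' c => by simp only [smul_eq_mul, add_mul])
    (fun r b c => by simp only [smul_eq_mul]; ring)
    (fun b c c' => by simp only [map_add, mul_add])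
    (fun r b c => by simp only [map_smul, smul_eq_mul]; ring))

@[simp] lemma tau_tmul (c : k) (x : H) : Q.tau (c ⊗ₜ[k] x) = c * Q.counit x := rfl

/-- `a ⊗ w ↦ τ(w) • a` on `H ⊗ (k ⊗ H)`. -/
noncomputable def Lam : H ⊗[k] (k ⊗[k] H) →ₗ[k] H :=
  TensorProduct.lift (LinearMap.mk₂ k (fun a w => Q.tau w • a)
    (fun b b' c => by simp [smul_add])
    (fun r b c => by simp [smul_comm r])
    (fun b c c' => by simp [map_add, add_smul])
    (fun r b c => by simp [map_smul, smul_smul, mul_comm]))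

@[simp] lemma Lam_tmul (a : H) (w : k ⊗[k] H) : Q.Lam (a ⊗ₜ[k] w) = Q.tau w • a := rfl

lemma psa_Phi : Q.psa Q.Phi = 1 := by
  have key : ∀ u : H ⊗[k] (H ⊗[k] H), Q.psa u
      = Q.Lam ((TensorProduct.map LinearMap.id
          (TensorProduct.map Q.counit.toLinearMap LinearMap.id)) u) := by
    intro u
    induction u using TensorProduct.induction_on with
    | zero => simp
    | tmul a w =>
      induction w using TensorProduct.induction_on with
      | zero => simp
      | tmul b c => simp
      | add u v hu hv => simp only [TensorProduct.tmul_add, map_add, hu, hv]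
    | add u v hu hv => simp [hu, hv]
  rw [key]
  have h2 := Q.counit_mid_Phi
  rw [algMap_apply] at h2
  have h3 : (Algebra.TensorProduct.map Q.counit (AlgHom.id k H)).toLinearMap
      = TensorProduct.map Q.counit.toLinearMap LinearMap.id := by
    apply LinearMap.ext
    intro u
    rw [AlgHom.toLinearMap_apply, algMap_apply]
    rfl
  have h5 : (AlgHom.id k H).toLinearMap = (LinearMap.id : H →ₗ[k] H) := rfl
  rw [h3, h5] at h2
  rw [h2]
  rw [show (1 : H ⊗[k] (k ⊗[k] H)) = (1:H) ⊗ₜ[k] ((1:k) ⊗ₜ[k] (1:H)) by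
    rw [Algebra.TensorProduct.one_def, Algebra.TensorProduct.one_def]]
  simp

lemma psa_aux1 (w : H ⊗[k] H) :
    Q.psa ((Algebra.TensorProduct.assoc k k k H H H)
      ((Algebra.TensorProduct.map Q.comul (AlgHom.id k H)) w)) = Q.tha w := by
  induction w using TensorProduct.induction_on with
  | zero => simp
  | tmul y z =>
    simp only [Algebra.TensorProduct.map_tmul, AlgHom.coe_id, id_eq]
    have sub : ∀ e : H ⊗[k] H, Q.psa ((Algebra.TensorProduct.assoc k k k H H H) (e ⊗ₜ[k] z))
        = Q.counit z • Q.th e := by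
      intro e
      induction e using TensorProduct.induction_on with
      | zero => simp
      | tmul p q =>
        rw [Algebra.TensorProduct.assoc_tmul]
        simp [smul_smul, mul_comm]
      | add u v hu hv => simp only [TensorProduct.add_tmul, map_add, hu, hv, smul_add]
    rw [sub, th_comul]
    simp
  | add u v hu hv => rw [map_add, map_add, map_add, hu, hv, ← map_add]

lemma psa_aux2 (w : H ⊗[k] H) :
    Q.psa ((Algebra.TensorProduct.assoc k k k H H H) (w ⊗ₜ[k] (1:H))) = Q.tha w := by
  induction w using TensorProduct.induction_on with
  | zero => simp
  | tmul y z =>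
    rw [Algebra.TensorProduct.assoc_tmul]
    simp
  | add u v hu hv => simp only [TensorProduct.add_tmul, map_add, hu, hv]

lemma psa_aux3 (w : H ⊗[k] H) :
    Q.psa ((Algebra.TensorProduct.map (AlgHom.id k H) Q.comul) w) = Q.tha w := by
  induction w using TensorProduct.induction_on with
  | zero => simp
  | tmul y z => simp [eea_comul]
  | add u v hu hv => rw [map_add, map_add, hu, hv, ← map_add]

lemma Oma_aux5 (u : H ⊗[k] (H ⊗[k] H)) :
    (Algebra.TensorProduct.map (AlgHom.id k H) Q.psa)
      ((Algebra.TensorProduct.assoc k k k H H (H ⊗[k] H))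
        ((Algebra.TensorProduct.map Q.comul (AlgHom.id k (H ⊗[k] H))) u))
    = Q.comul (Q.psa u) := by
  induction u using TensorProduct.induction_on with
  | zero => simp
  | tmul x w =>
    simp only [Algebra.TensorProduct.map_tmul, AlgHom.coe_id, id_eq]
    have sub : ∀ e : H ⊗[k] H,
        (Algebra.TensorProduct.map (AlgHom.id k H) Q.psa)
          ((Algebra.TensorProduct.assoc k k k H H (H ⊗[k] H)) (e ⊗ₜ[k] w))
        = Q.eea w • e := by
      intro e
      induction e using TensorProduct.induction_on with
      | zero => simp
      | tmul p q =>
        rw [Algebra.TensorProduct.assoc_tmul]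
        simp [TensorProduct.tmul_smul, TensorProduct.smul_tmul']
      | add u v hu hv => simp only [TensorProduct.add_tmul, map_add, hu, hv, smul_add]
    rw [sub]
    simp
  | add u v hu hv => rw [map_add, map_add, map_add, map_add, hu, hv, ← map_add, ← map_add]

lemma e3_idem :
    ((Algebra.TensorProduct.map (AlgHom.id k H) Q.tha) Q.Phi)
      * ((Algebra.TensorProduct.map (AlgHom.id k H) Q.tha) Q.Phi)
    = (Algebra.TensorProduct.map (AlgHom.id k H) Q.tha) Q.Phi := by
  have hp := Q.pentagon
  have happ := congrArg (Algebra.TensorProduct.map (AlgHom.id k H) Q.psa) hp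
  rw [map_mul, map_mul, map_mul] at happ
  have t1 : (Algebra.TensorProduct.map (AlgHom.id k H) Q.psa) ((1:H) ⊗ₜ[k] Q.Phi)
      = 1 := by
    rw [Algebra.TensorProduct.map_tmul, psa_Phi]
    simp [Algebra.TensorProduct.one_def]
  have t2 : (Algebra.TensorProduct.map (AlgHom.id k H) Q.psa)
      ((Algebra.TensorProduct.map (AlgHom.id k H)
          ((Algebra.TensorProduct.assoc k k k H H H).toAlgHom.comp
            (Algebra.TensorProduct.map Q.comul (AlgHom.id k H)))) Q.Phi)
      = (Algebra.TensorProduct.map (AlgHom.id k H) Q.tha) Q.Phi := by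
    have : ∀ u : H ⊗[k] (H ⊗[k] H),
        (Algebra.TensorProduct.map (AlgHom.id k H) Q.psa)
          ((Algebra.TensorProduct.map (AlgHom.id k H)
            ((Algebra.TensorProduct.assoc k k k H H H).toAlgHom.comp
              (Algebra.TensorProduct.map Q.comul (AlgHom.id k H)))) u)
        = (Algebra.TensorProduct.map (AlgHom.id k H) Q.tha) u := by
      intro u
      induction u using TensorProduct.induction_on with
      | zero => simp
      | tmul a w =>
        simp only [Algebra.TensorProduct.map_tmul, AlgHom.coe_id, id_eq,
          AlgHom.coe_comp, Function.comp_apply, AlgEquiv.toAlgHom_eq_coe, AlgHom.coe_coe, AlgEquiv.coe_toAlgHom]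
        rw [psa_aux1]
      | add u v hu hv => rw [map_add, map_add, map_add, hu, hv]
    exact this Q.Phi
  have t3 : (Algebra.TensorProduct.map (AlgHom.id k H) Q.psa)
      ((Algebra.TensorProduct.map (AlgHom.id k H)
            (Algebra.TensorProduct.assoc k k k H H H).toAlgHom)
          ((Algebra.TensorProduct.assoc k k k H (H ⊗[k] H) H) (Q.Phi ⊗ₜ[k] (1:H))))
      = (Algebra.TensorProduct.map (AlgHom.id k H) Q.tha) Q.Phi := by
    have : ∀ u : H ⊗[k] (H ⊗[k] H),
        (Algebra.TensorProduct.map (AlgHom.id k H) Q.psa)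
          ((Algebra.TensorProduct.map (AlgHom.id k H)
            (Algebra.TensorProduct.assoc k k k H H H).toAlgHom)
            ((Algebra.TensorProduct.assoc k k k H (H ⊗[k] H) H) (u ⊗ₜ[k] (1:H))))
        = (Algebra.TensorProduct.map (AlgHom.id k H) Q.tha) u := by
      intro u
      induction u using TensorProduct.induction_on with
      | zero => simp
      | tmul a w =>
        rw [Algebra.TensorProduct.assoc_tmul]
        simp only [Algebra.TensorProduct.map_tmul, AlgHom.coe_id, id_eq,
          AlgEquiv.toAlgHom_eq_coe, AlgHom.coe_coe, AlgEquiv.coe_toAlgHom]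
        rw [psa_aux2]
      | add u v hu hv =>
        rw [TensorProduct.add_tmul, map_add, map_add, map_add, map_add, hu, hv]
    exact this Q.Phi
  have t4 : (Algebra.TensorProduct.map (AlgHom.id k H) Q.psa)
      ((Algebra.TensorProduct.map (AlgHom.id k H)
        (Algebra.TensorProduct.map (AlgHom.id k H) Q.comul)) Q.Phi)
      = (Algebra.TensorProduct.map (AlgHom.id k H) Q.tha) Q.Phi := by
    have : ∀ u : H ⊗[k] (H ⊗[k] H),
        (Algebra.TensorProduct.map (AlgHom.id k H) Q.psa)
          ((Algebra.TensorProduct.map (AlgHom.id k H)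
            (Algebra.TensorProduct.map (AlgHom.id k H) Q.comul)) u)
        = (Algebra.TensorProduct.map (AlgHom.id k H) Q.tha) u := by
      intro u
      induction u using TensorProduct.induction_on with
      | zero => simp
      | tmul a w =>
        simp only [Algebra.TensorProduct.map_tmul, AlgHom.coe_id, id_eq]
        rw [psa_aux3]
      | add u v hu hv => rw [map_add, map_add, map_add, hu, hv]
    exact this Q.Phi
  rw [t1, t2, t3, t4, Oma_aux5, psa_Phi, map_one, mul_one, one_mul] at happ
  exact happ

lemma e3_Phi :
    (Algebra.TensorProduct.map (AlgHom.id k H) Q.tha) Q.Phi = 1 := by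
  have hinv : ((Algebra.TensorProduct.map (AlgHom.id k H) Q.tha) Q.Phi)
      * ((Algebra.TensorProduct.map (AlgHom.id k H) Q.tha) Q.PhiInv) = 1 := by
    rw [← map_mul, Q.Phi_invertible, map_one]
  have h := Q.e3_idem
  calc (Algebra.TensorProduct.map (AlgHom.id k H) Q.tha) Q.Phi
      = ((Algebra.TensorProduct.map (AlgHom.id k H) Q.tha) Q.Phi) * 1 := by rw [mul_one]
    _ = ((Algebra.TensorProduct.map (AlgHom.id k H) Q.tha) Q.Phi) *
        (((Algebra.TensorProduct.map (AlgHom.id k H) Q.tha) Q.Phi)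
          * ((Algebra.TensorProduct.map (AlgHom.id k H) Q.tha) Q.PhiInv)) := by rw [hinv]
    _ = (((Algebra.TensorProduct.map (AlgHom.id k H) Q.tha) Q.Phi)
          * ((Algebra.TensorProduct.map (AlgHom.id k H) Q.tha) Q.Phi))
          * ((Algebra.TensorProduct.map (AlgHom.id k H) Q.tha) Q.PhiInv) := by
        rw [mul_assoc]
    _ = 1 := by rw [h, hinv]

lemma e3_PhiInv :
    (Algebra.TensorProduct.map (AlgHom.id k H) Q.tha) Q.PhiInv = 1 := by
  have : ((Algebra.TensorProduct.map (AlgHom.id k H) Q.tha) Q.Phi)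
      * ((Algebra.TensorProduct.map (AlgHom.id k H) Q.tha) Q.PhiInv) = 1 := by
    rw [← map_mul, Q.Phi_invertible, map_one]
  rwa [e3_Phi, one_mul] at this

lemma th_PhiInv :
    (TensorProduct.map LinearMap.id Q.th) Q.PhiInv = (1:H) ⊗ₜ[k] (1:H) := by
  have h := Q.e3_PhiInv
  rw [algMap_apply] at h
  have h3 : Q.tha.toLinearMap = Q.th := by
    apply LinearMap.ext
    intro u
    rw [AlgHom.toLinearMap_apply, tha_eq_th]
  have h5 : (AlgHom.id k H).toLinearMap = (LinearMap.id : H →ₗ[k] H) := rfl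
  rw [h3, h5] at h
  rw [h, Algebra.TensorProduct.one_def]

end QuasiHopfAlgebra
namespace QuasiHopfAlgebra
variable {k H : Type*} [Field k] [Ring H] [Algebra k H] (Q : QuasiHopfAlgebra k H)

section Sinv
variable (hS : Function.Bijective Q.S)

/-- Inverse of the antipode. -/
noncomputable def Sinv : H →ₗ[k] H :=
  ((LinearEquiv.ofBijective Q.S hS).symm : H ≃ₗ[k] H)

lemma S_Sinv (x : H) : Q.S (Q.Sinv hS x) = x := by
  have := (LinearEquiv.ofBijective Q.S hS).apply_symm_apply x
  simpa [Sinv, LinearEquiv.ofBijective_apply] using this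

lemma Sinv_S (x : H) : Q.Sinv hS (Q.S x) = x := by
  have := (LinearEquiv.ofBijective Q.S hS).symm_apply_apply x
  simpa [Sinv, LinearEquiv.ofBijective_apply] using this

lemma Sinv_mul (a b : H) : Q.Sinv hS (a * b) = Q.Sinv hS b * Q.Sinv hS a := by
  apply hS.injective
  rw [S_Sinv, Q.S_mul, S_Sinv, S_Sinv]

lemma Sinv_one : Q.Sinv hS (1:H) = 1 := by
  apply hS.injective
  rw [S_Sinv, Q.S_one]

/-- `b ⊗ c ↦ S⁻¹(α c) b`. -/
noncomputable def qmap : H ⊗[k] H →ₗ[k] H :=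
  TensorProduct.lift (LinearMap.mk₂ k (fun b c => Q.Sinv hS (Q.alpha * c) * b)
    (fun b b' c => by simp [mul_add, add_mul])
    (fun r b c => by simp [mul_smul_comm])
    (fun b c c' => by simp [mul_add, map_add, add_mul])
    (fun r b c => by simp [mul_smul_comm, map_smul, smul_mul_assoc]))

@[simp] lemma qmap_tmul (b c : H) :
    Q.qmap hS (b ⊗ₜ[k] c) = Q.Sinv hS (Q.alpha * c) * b := rfl

end Sinv

/-- `a ⊗ w ↦ Δ(a) p_R (1 ⊗ Gsa w)`. -/
noncomputable def Yv : H ⊗[k] (H ⊗[k] H) →ₗ[k] H ⊗[k] H :=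
  TensorProduct.lift (LinearMap.mk₂ k
    (fun a w => Q.comul a * Q.pR * ((1:H) ⊗ₜ[k] Q.Gsa w))
    (fun b b' c => by simp [map_add, add_mul])
    (fun r b c => by simp [map_smul, smul_mul_assoc])
    (fun b c c' => by simp [map_add, tmul_add, mul_add])
    (fun r b c => by simp [map_smul, tmul_smul, mul_smul_comm]))

@[simp] lemma Yv_tmul (a : H) (w : H ⊗[k] H) :
    Q.Yv (a ⊗ₜ[k] w) = Q.comul a * Q.pR * ((1:H) ⊗ₜ[k] Q.Gsa w) := rfl

lemma Mm_qmap (hS : Function.Bijective Q.S) (u : H ⊗[k] (H ⊗[k] H)) :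
    Q.Mm (TensorProduct.map LinearMap.id (Q.qmap hS) u) = Q.Yv u := by
  induction u using TensorProduct.induction_on with
  | zero => simp
  | tmul a w =>
    simp only [TensorProduct.map_tmul, LinearMap.id_apply, Mm_tmul, Yv_tmul]
    congr 2
    induction w using TensorProduct.induction_on with
    | zero => simp [Q.S_one]  -- S (qmap 0) vs Gsa 0 : both 0? qmap 0 =0, S 0 = 0, Gsa 0 = 0
    | tmul b c =>
      rw [qmap_tmul, Q.S_mul, S_Sinv]
      simp [mul_assoc]
    | add u v hu hv => simp only [map_add, hu, hv]
  | add u v hu hv => simp only [map_add, hu, hv]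

lemma SB2 (q : H) (w ω : H ⊗[k] H) :
    Q.Gin ((q ⊗ₜ[k] w) *
      (TensorProduct.map LinearMap.id ((TensorProduct.mk k H H).flip (1:H)) ω))
    = q * Q.Gb ω * Q.Gsa w := by
  induction ω using TensorProduct.induction_on with
  | zero => simp
  | tmul y z =>
    simp only [TensorProduct.map_tmul, LinearMap.id_apply, LinearMap.flip_apply,
      TensorProduct.mk_apply, Algebra.TensorProduct.tmul_mul_tmul, Gin_tmul]
    rw [Gsa_mul_pure]
    simp [mul_assoc]
  | add u v hu hv => simp only [map_add, mul_add, hu, hv, add_mul]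

lemma SB1 (e : H ⊗[k] H) (w : H ⊗[k] H) (v : H ⊗[k] (H ⊗[k] H)) :
    TensorProduct.map LinearMap.id Q.Gin
      ((Algebra.TensorProduct.assoc k k k H H (H ⊗[k] H)) (e ⊗ₜ[k] w)
        * (Algebra.TensorProduct.map (AlgHom.id k H)
            (Algebra.TensorProduct.map (AlgHom.id k H)
              (Algebra.TensorProduct.includeLeft : H →ₐ[k] H ⊗[k] H))) v)
    = e * (TensorProduct.map LinearMap.id Q.Gb v) * ((1:H) ⊗ₜ[k] Q.Gsa w) := by
  induction e using TensorProduct.induction_on with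
  | zero => simp
  | tmul p q =>
    rw [Algebra.TensorProduct.assoc_tmul]
    induction v using TensorProduct.induction_on with
    | zero => simp
    | tmul x ω =>
      simp only [Algebra.TensorProduct.map_tmul, AlgHom.coe_id, id_eq,
        TensorProduct.map_tmul, LinearMap.id_apply,
        Algebra.TensorProduct.tmul_mul_tmul]
      have hconv : (Algebra.TensorProduct.map (AlgHom.id k H)
          (Algebra.TensorProduct.includeLeft : H →ₐ[k] H ⊗[k] H)) ω
          = TensorProduct.map LinearMap.id ((TensorProduct.mk k H H).flip (1:H)) ω := by
        rw [algMap_apply]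
        congr 1
      rw [hconv, SB2]
      simp [mul_assoc]
    | add u v hu hv => simp only [map_add, mul_add, hu, hv, add_mul]
  | add u v hu hv =>
    simp only [TensorProduct.add_tmul, map_add, add_mul, hu, hv]

lemma Yv_eq (u : H ⊗[k] (H ⊗[k] H)) :
    Q.Yv u = TensorProduct.map LinearMap.id Q.Gin
      ((Algebra.TensorProduct.assoc k k k H H (H ⊗[k] H))
          ((Algebra.TensorProduct.map Q.comul (AlgHom.id k (H ⊗[k] H))) u)
        * (Algebra.TensorProduct.map (AlgHom.id k H)
            (Algebra.TensorProduct.map (AlgHom.id k H)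
              (Algebra.TensorProduct.includeLeft : H →ₐ[k] H ⊗[k] H))) Q.PhiInv) := by
  induction u using TensorProduct.induction_on with
  | zero => simp
  | tmul a w =>
    rw [Algebra.TensorProduct.map_tmul, SB1, Yv_tmul, pR_eq]
    rfl
  | add u v hu hv => simp only [map_add, hu, hv, add_mul]

lemma iota_eq (u : H ⊗[k] (H ⊗[k] H)) :
    (Algebra.TensorProduct.map (AlgHom.id k H)
        (Algebra.TensorProduct.assoc k k k H H H).toAlgHom)
      ((Algebra.TensorProduct.assoc k k k H (H ⊗[k] H) H) (u ⊗ₜ[k] (1:H)))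
    = (Algebra.TensorProduct.map (AlgHom.id k H)
        (Algebra.TensorProduct.map (AlgHom.id k H)
          (Algebra.TensorProduct.includeLeft : H →ₐ[k] H ⊗[k] H))) u := by
  induction u using TensorProduct.induction_on with
  | zero => simp
  | tmul a w =>
    rw [Algebra.TensorProduct.assoc_tmul]
    simp only [Algebra.TensorProduct.map_tmul, AlgHom.coe_id, id_eq,
      AlgEquiv.toAlgHom_eq_coe, AlgHom.coe_coe]
    congr 1
    induction w using TensorProduct.induction_on with
    | zero => simp
    | tmul y z =>
      rw [AlgEquiv.coe_toAlgHom, Algebra.TensorProduct.assoc_tmul]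
      simp
    | add u v hu hv => rw [TensorProduct.add_tmul, map_add, map_add, hu, hv]
  | add u v hu hv =>
    rw [TensorProduct.add_tmul, map_add, map_add, map_add, hu, hv]

lemma monoid_aux {A : Type*} [Monoid A] (D D' I I' L1 L2 R2 : A)
    (hp : L1 * L2 * I = D' * R2) (hiA : I * I' = 1) (hDD : D * D' = 1) :
    R2 * I' = D * L1 * L2 := by
  calc R2 * I' = (D * D') * R2 * I' := by rw [hDD, one_mul]
    _ = D * (D' * R2) * I' := by rw [mul_assoc D D' R2]
    _ = D * (L1 * L2 * I) * I' := by rw [hp]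
    _ = D * (L1 * L2) * (I * I') := by
        rw [← mul_assoc D (L1 * L2) I, mul_assoc (D * (L1 * L2)) I I']
    _ = D * L1 * L2 := by rw [hiA, mul_one, ← mul_assoc]

lemma Wp_eq :
    (Algebra.TensorProduct.assoc k k k H H (H ⊗[k] H))
        ((Algebra.TensorProduct.map Q.comul (AlgHom.id k (H ⊗[k] H))) Q.Phi)
      * (Algebra.TensorProduct.map (AlgHom.id k H)
          (Algebra.TensorProduct.map (AlgHom.id k H)
            (Algebra.TensorProduct.includeLeft : H →ₐ[k] H ⊗[k] H))) Q.PhiInv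
    = (Algebra.TensorProduct.map (AlgHom.id k H)
        (Algebra.TensorProduct.map (AlgHom.id k H) Q.comul)) Q.PhiInv
      * ((1:H) ⊗ₜ[k] Q.Phi)
      * (Algebra.TensorProduct.map (AlgHom.id k H)
          ((Algebra.TensorProduct.assoc k k k H H H).toAlgHom.comp
            (Algebra.TensorProduct.map Q.comul (AlgHom.id k H)))) Q.Phi := by
  have hp := Q.pentagon
  rw [iota_eq] at hp
  refine monoid_aux _ _ _ _ _ _ _ hp ?_ ?_
  · rw [← map_mul, Q.Phi_invertible, map_one]
  · rw [← map_mul, Q.invertible_Phi, map_one]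

end QuasiHopfAlgebra
namespace QuasiHopfAlgebra
variable {k H : Type*} [Field k] [Ring H] [Algebra k H] (Q : QuasiHopfAlgebra k H)

/-- `z ↦ ε(z) • (1 ⊗ 1)`. -/
noncomputable def eps1 : H →ₗ[k] H ⊗[k] H :=
  (LinearMap.toSpanSingleton k (H ⊗[k] H) ((1:H) ⊗ₜ[k] (1:H))) ∘ₗ Q.counit.toLinearMap

@[simp] lemma eps1_apply (z : H) :
    Q.eps1 z = Q.counit z • ((1:H) ⊗ₜ[k] (1:H)) := rfl

/-- `q ⊗ r ↦ ε(q) • r`. -/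
noncomputable def thL : H ⊗[k] H →ₗ[k] H :=
  TensorProduct.lift (LinearMap.mk₂ k (fun q r => Q.counit q • r)
    (fun b b' c => by simp [map_add, add_smul])
    (fun r b c => by simp [map_smul, smul_smul, mul_comm])
    (fun b c c' => by simp [smul_add])
    (fun r b c => by simp [smul_comm r]))

@[simp] lemma thL_tmul (q r : H) : Q.thL (q ⊗ₜ[k] r) = Q.counit q • r := rfl

lemma CL3_inner (y z : H) (ν : H ⊗[k] (H ⊗[k] H)) :
    Q.Gin ((y ⊗ₜ[k] Q.comul z) * ν)
    = Q.Gin ((y ⊗ₜ[k] (Q.counit z • ((1:H) ⊗ₜ[k] (1:H)))) * ν) := by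
  induction ν using TensorProduct.induction_on with
  | zero => simp
  | tmul q e =>
    simp only [Algebra.TensorProduct.tmul_mul_tmul, Gin_tmul]
    rw [Gsa_comul_mul, smul_mul_assoc, ← Algebra.TensorProduct.one_def, one_mul]
    simp [mul_smul_comm, LinearMap.map_smul]
  | add u v hu hv => simp only [mul_add, LinearMap.map_add, hu, hv]

lemma CL3 (w : H ⊗[k] (H ⊗[k] H)) (κ : H ⊗[k] (H ⊗[k] (H ⊗[k] H))) :
    TensorProduct.map LinearMap.id Q.Gin
      ((Algebra.TensorProduct.map (AlgHom.id k H)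
        (Algebra.TensorProduct.map (AlgHom.id k H) Q.comul)) w * κ)
    = TensorProduct.map LinearMap.id Q.Gin
        ((TensorProduct.map LinearMap.id (TensorProduct.map LinearMap.id Q.eps1)) w * κ) := by
  induction w using TensorProduct.induction_on with
  | zero =>
    rw [show (Algebra.TensorProduct.map (AlgHom.id k H)
        (Algebra.TensorProduct.map (AlgHom.id k H) Q.comul))
          (0 : H ⊗[k] (H ⊗[k] H)) = 0 from
      (Algebra.TensorProduct.map (AlgHom.id k H)
        (Algebra.TensorProduct.map (AlgHom.id k H) Q.comul)).toLinearMap.map_zero]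
    rw [LinearMap.map_zero, A4_zero_mul]
  | tmul x w' =>
    induction w' using TensorProduct.induction_on with
    | zero =>
      rw [TensorProduct.tmul_zero]
      rw [show (Algebra.TensorProduct.map (AlgHom.id k H)
          (Algebra.TensorProduct.map (AlgHom.id k H) Q.comul))
            (0 : H ⊗[k] (H ⊗[k] H)) = 0 from
        (Algebra.TensorProduct.map (AlgHom.id k H)
          (Algebra.TensorProduct.map (AlgHom.id k H) Q.comul)).toLinearMap.map_zero]
      rw [LinearMap.map_zero, A4_zero_mul]
    | tmul y z =>
      simp only [Algebra.TensorProduct.map_tmul, AlgHom.coe_id, id_eq,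
        TensorProduct.map_tmul, LinearMap.id_apply, eps1_apply]
      rw [tmul_mul_eq (x := x) (y := y ⊗ₜ[k] Q.comul z),
        tmul_mul_eq (x := x) (y := y ⊗ₜ[k] (Q.counit z • ((1:H) ⊗ₜ[k] (1:H))))]
      rw [← LinearMap.comp_apply, ← TensorProduct.map_comp,
        ← LinearMap.comp_apply, ← TensorProduct.map_comp]
      have hgin : Q.Gin ∘ₗ LinearMap.mulLeft k (y ⊗ₜ[k] Q.comul z)
          = Q.Gin ∘ₗ LinearMap.mulLeft k
              (y ⊗ₜ[k] (Q.counit z • ((1:H) ⊗ₜ[k] (1:H)))) := by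
        apply LinearMap.ext
        intro ν
        simp only [LinearMap.comp_apply, LinearMap.mulLeft_apply]
        exact Q.CL3_inner y z ν
      rw [hgin]
    | add u v hu hv =>
      rw [TensorProduct.tmul_add]
      rw [show ∀ a b : H ⊗[k] (H ⊗[k] H), (Algebra.TensorProduct.map (AlgHom.id k H)
          (Algebra.TensorProduct.map (AlgHom.id k H) Q.comul)) (a + b)
          = (Algebra.TensorProduct.map (AlgHom.id k H)
          (Algebra.TensorProduct.map (AlgHom.id k H) Q.comul)) a
          + (Algebra.TensorProduct.map (AlgHom.id k H)
          (Algebra.TensorProduct.map (AlgHom.id k H) Q.comul)) b from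
        fun a b => (Algebra.TensorProduct.map (AlgHom.id k H)
          (Algebra.TensorProduct.map (AlgHom.id k H) Q.comul)).toLinearMap.map_add a b]
      rw [LinearMap.map_add, A4_add_mul, A4_add_mul, LinearMap.map_add,
        LinearMap.map_add, hu, hv]
  | add u v hu hv =>
    rw [show ∀ a b : H ⊗[k] (H ⊗[k] H), (Algebra.TensorProduct.map (AlgHom.id k H)
        (Algebra.TensorProduct.map (AlgHom.id k H) Q.comul)) (a + b)
        = (Algebra.TensorProduct.map (AlgHom.id k H)
        (Algebra.TensorProduct.map (AlgHom.id k H) Q.comul)) a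
        + (Algebra.TensorProduct.map (AlgHom.id k H)
        (Algebra.TensorProduct.map (AlgHom.id k H) Q.comul)) b from
      fun a b => (Algebra.TensorProduct.map (AlgHom.id k H)
        (Algebra.TensorProduct.map (AlgHom.id k H) Q.comul)).toLinearMap.map_add a b]
    rw [LinearMap.map_add, A4_add_mul, A4_add_mul, LinearMap.map_add,
      LinearMap.map_add, hu, hv]

lemma jm_PhiInv :
    (TensorProduct.map LinearMap.id (TensorProduct.map LinearMap.id Q.eps1)) Q.PhiInv
    = (1 : H ⊗[k] (H ⊗[k] (H ⊗[k] H))) := by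
  have key : ∀ u : H ⊗[k] (H ⊗[k] H),
      (TensorProduct.map LinearMap.id (TensorProduct.map LinearMap.id Q.eps1)) u
      = (TensorProduct.map LinearMap.id
          ((TensorProduct.mk k H (H ⊗[k] H)).flip ((1:H) ⊗ₜ[k] (1:H))))
          ((TensorProduct.map LinearMap.id Q.th) u) := by
    intro u
    induction u using TensorProduct.induction_on with
    | zero => simp
    | tmul x w =>
      simp only [TensorProduct.map_tmul, LinearMap.id_apply]
      congr 1
      induction w using TensorProduct.induction_on with
      | zero => simp
      | tmul y z =>
        simp only [TensorProduct.map_tmul, LinearMap.id_apply, eps1_apply, th_tmul,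
          LinearMap.flip_apply, TensorProduct.mk_apply]
        rw [TensorProduct.tmul_smul, TensorProduct.smul_tmul']
      | add u v hu hv => simp only [TensorProduct.tmul_add, map_add, hu, hv]
    | add u v hu hv => simp only [map_add, hu, hv]
  rw [key, th_PhiInv]
  simp only [TensorProduct.map_tmul, LinearMap.id_apply, LinearMap.flip_apply,
    TensorProduct.mk_apply]
  rw [Algebra.TensorProduct.one_def, Algebra.TensorProduct.one_def,
    Algebra.TensorProduct.one_def]

lemma SB3a (a : H) (ω : H ⊗[k] H) (d : H ⊗[k] H) (r : H) :
    Q.Gin ((a ⊗ₜ[k] ω) * (Algebra.TensorProduct.assoc k k k H H H) (d ⊗ₜ[k] r))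
    = a * Q.Gb d * (Q.Gsa ω * r) := by
  induction d using TensorProduct.induction_on with
  | zero => simp
  | tmul c₁ c₂ =>
    rw [Algebra.TensorProduct.assoc_tmul]
    simp only [Algebra.TensorProduct.tmul_mul_tmul, Gin_tmul, Gb_tmul]
    rw [Gsa_mul_pure]
    simp [mul_assoc]
  | add u v hu hv =>
    simp only [TensorProduct.add_tmul, map_add, mul_add, hu, hv, add_mul]

lemma SBmain (w : H ⊗[k] (H ⊗[k] H)) (e : H ⊗[k] H) :
    Q.Gin (w * ((Algebra.TensorProduct.assoc k k k H H H).toAlgHom.comp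
        (Algebra.TensorProduct.map Q.comul (AlgHom.id k H))) e)
    = Q.Gin w * Q.thL e := by
  induction w using TensorProduct.induction_on with
  | zero => simp
  | tmul a ω =>
    induction e using TensorProduct.induction_on with
    | zero => simp
    | tmul q' r =>
      simp only [AlgHom.coe_comp, Function.comp_apply, Algebra.TensorProduct.map_tmul,
        AlgHom.coe_id, id_eq, AlgEquiv.toAlgHom_eq_coe, AlgHom.coe_coe, thL_tmul, AlgEquiv.coe_toAlgHom]
      rw [SB3a, Gb_comul]
      simp [Gin_tmul, mul_assoc, mul_smul_comm, smul_mul_assoc]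
    | add u v hu hv => simp only [map_add, mul_add, hu, hv, smul_add]
  | add u v hu hv => simp only [add_mul, map_add, hu, hv]

lemma CL4 (u w : H ⊗[k] (H ⊗[k] H)) :
    TensorProduct.map LinearMap.id Q.Gin
      (((1:H) ⊗ₜ[k] w) *
        (Algebra.TensorProduct.map (AlgHom.id k H)
          ((Algebra.TensorProduct.assoc k k k H H H).toAlgHom.comp
            (Algebra.TensorProduct.map Q.comul (AlgHom.id k H)))) u)
    = TensorProduct.map LinearMap.id (LinearMap.mulLeft k (Q.Gin w))
        ((TensorProduct.map LinearMap.id Q.thL) u) := by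
  induction u using TensorProduct.induction_on with
  | zero => simp
  | tmul p e =>
    simp only [Algebra.TensorProduct.map_tmul, AlgHom.coe_id, id_eq,
      Algebra.TensorProduct.tmul_mul_tmul, one_mul, TensorProduct.map_tmul,
      LinearMap.id_apply, LinearMap.mulLeft_apply]
    rw [SBmain]
  | add u v hu hv =>
    rw [show (Algebra.TensorProduct.map (AlgHom.id k H)
        ((Algebra.TensorProduct.assoc k k k H H H).toAlgHom.comp
          (Algebra.TensorProduct.map Q.comul (AlgHom.id k H)))) (u + v)
        = (Algebra.TensorProduct.map (AlgHom.id k H)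
        ((Algebra.TensorProduct.assoc k k k H H H).toAlgHom.comp
          (Algebra.TensorProduct.map Q.comul (AlgHom.id k H)))) u
        + (Algebra.TensorProduct.map (AlgHom.id k H)
        ((Algebra.TensorProduct.assoc k k k H H H).toAlgHom.comp
          (Algebra.TensorProduct.map Q.comul (AlgHom.id k H)))) v from
      (Algebra.TensorProduct.map (AlgHom.id k H)
        ((Algebra.TensorProduct.assoc k k k H H H).toAlgHom.comp
          (Algebra.TensorProduct.map Q.comul (AlgHom.id k H)))).toLinearMap.map_add u v]
    rw [A4_mul_add, LinearMap.map_add, LinearMap.map_add, LinearMap.map_add, hu, hv]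

lemma cm_Phi :
    (TensorProduct.map LinearMap.id Q.thL) Q.Phi = (1:H) ⊗ₜ[k] (1:H) := by
  have key : ∀ u : H ⊗[k] (H ⊗[k] H),
      (TensorProduct.map LinearMap.id Q.thL) u
      = (TensorProduct.map LinearMap.id (TensorProduct.lid k H).toLinearMap)
          ((TensorProduct.map LinearMap.id
            (TensorProduct.map Q.counit.toLinearMap LinearMap.id)) u) := by
    intro u
    induction u using TensorProduct.induction_on with
    | zero => simp
    | tmul x w =>
      simp only [TensorProduct.map_tmul, LinearMap.id_apply]
      congr 1
      induction w using TensorProduct.induction_on with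
      | zero => simp
      | tmul y z => simp
      | add u v hu hv => simp only [map_add, hu, hv]
    | add u v hu hv => simp only [map_add, hu, hv]
  rw [key]
  have h2 := Q.counit_mid_Phi
  rw [algMap_apply] at h2
  have h3 : (Algebra.TensorProduct.map Q.counit (AlgHom.id k H)).toLinearMap
      = TensorProduct.map Q.counit.toLinearMap LinearMap.id := by
    apply LinearMap.ext
    intro u
    rw [AlgHom.toLinearMap_apply, algMap_apply]
    rfl
  have h5 : (AlgHom.id k H).toLinearMap = (LinearMap.id : H →ₗ[k] H) := rfl
  rw [h3, h5] at h2
  rw [h2]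
  rw [show (1 : H ⊗[k] (k ⊗[k] H)) = (1:H) ⊗ₜ[k] ((1:k) ⊗ₜ[k] (1:H)) by
    rw [Algebra.TensorProduct.one_def, Algebra.TensorProduct.one_def]]
  simp

lemma R2 (hS : Function.Bijective Q.S) :
    Q.Mm (TensorProduct.map LinearMap.id (Q.qmap hS) Q.Phi)
      = (1:H) ⊗ₜ[k] (1:H) := by
  rw [Mm_qmap, Yv_eq, Wp_eq, mul_assoc, CL3, jm_PhiInv, A4_one_mul, CL4,
    Gin_Phi, cm_Phi, TensorProduct.map_tmul]
  simp

end QuasiHopfAlgebra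
namespace QuasiHopfAlgebra
variable {k H : Type*} [Field k] [Ring H] [Algebra k H] (Q : QuasiHopfAlgebra k H)

lemma Msandwich (x y : H) (v : H ⊗[k] H) :
    Q.Mm ((x ⊗ₜ[k] y) * v) = Q.comul x * Q.Mm v * ((1:H) ⊗ₜ[k] Q.S y) := by
  induction v using TensorProduct.induction_on with
  | zero => simp
  | tmul c d =>
    simp only [Algebra.TensorProduct.tmul_mul_tmul, Mm_tmul]
    rw [map_mul, Q.S_mul]
    rw [show ((1:H) ⊗ₜ[k] (Q.S d * Q.S y)) = ((1:H) ⊗ₜ[k] Q.S d) * ((1:H) ⊗ₜ[k] Q.S y) by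
      simp [Algebra.TensorProduct.tmul_mul_tmul]]
    simp only [mul_assoc]
  | add u v hu hv => simp only [mul_add, map_add, hu, hv, add_mul]

lemma Mb (q : H ⊗[k] H) (g : H) :
    Q.Mm (q * Q.comul g) = Q.Mm q * (g ⊗ₜ[k] (1:H)) := by
  induction q using TensorProduct.induction_on with
  | zero => simp
  | tmul c d =>
    rw [Msandwich, R1, Mm_tmul]
    have comm : (g ⊗ₜ[k] (1:H)) * ((1:H) ⊗ₜ[k] Q.S d)
        = ((1:H) ⊗ₜ[k] Q.S d) * (g ⊗ₜ[k] (1:H)) := by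
      simp [Algebra.TensorProduct.tmul_mul_tmul]
    rw [mul_assoc (Q.comul c) (Q.pR * (g ⊗ₜ[k] (1:H))) ((1:H) ⊗ₜ[k] Q.S d),
      mul_assoc Q.pR (g ⊗ₜ[k] (1:H)) ((1:H) ⊗ₜ[k] Q.S d), comm,
      ← mul_assoc Q.pR ((1:H) ⊗ₜ[k] Q.S d) (g ⊗ₜ[k] (1:H)),
      ← mul_assoc (Q.comul c) (Q.pR * ((1:H) ⊗ₜ[k] Q.S d)) (g ⊗ₜ[k] (1:H)),
      ← mul_assoc (Q.comul c) Q.pR ((1:H) ⊗ₜ[k] Q.S d)]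
  | add u v hu hv => simp only [add_mul, map_add, hu, hv]

lemma Mleft (h : H) (v : H ⊗[k] H) :
    Q.Mm ((h ⊗ₜ[k] (1:H)) * v) = Q.comul h * Q.Mm v := by
  rw [Msandwich, Q.S_one, ← Algebra.TensorProduct.one_def, mul_one]

lemma mapSinv_mul (hS : Function.Bijective Q.S) (h : H) (v : H ⊗[k] H) :
    TensorProduct.map LinearMap.id (Q.Sinv hS) ((h ⊗ₜ[k] (1:H)) * v)
    = (h ⊗ₜ[k] (1:H)) * TensorProduct.map LinearMap.id (Q.Sinv hS) v := by
  induction v using TensorProduct.induction_on with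
  | zero => simp
  | tmul a b => simp [Algebra.TensorProduct.tmul_mul_tmul]
  | add u v hu hv => simp only [mul_add, map_add, hu, hv]

lemma Sinv_Gsa (hS : Function.Bijective Q.S) (w : H ⊗[k] H) :
    Q.Sinv hS (Q.Gsa w) = Q.qmap hS w := by
  induction w using TensorProduct.induction_on with
  | zero => simp
  | tmul b c =>
    rw [Gsa_tmul, qmap_tmul, Sinv_mul, Sinv_mul, Sinv_S, Sinv_mul]
    rw [mul_assoc]
  | add u v hu hv => simp only [map_add, hu, hv]

lemma TSinv (hS : Function.Bijective Q.S) (u : H ⊗[k] (H ⊗[k] H)) (d : H ⊗[k] H) :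
    TensorProduct.map LinearMap.id (Q.Sinv hS)
      (TensorProduct.map LinearMap.id Q.Gsa
        (u * (Algebra.TensorProduct.assoc k k k H H H) (d ⊗ₜ[k] (1:H))))
    = (TensorProduct.map LinearMap.id (Q.qmap hS) u) * d := by
  induction d using TensorProduct.induction_on with
  | zero => simp
  | tmul c₁ c₂ =>
    rw [Algebra.TensorProduct.assoc_tmul]
    induction u using TensorProduct.induction_on with
    | zero => simp
    | tmul X w =>
      simp only [Algebra.TensorProduct.tmul_mul_tmul, TensorProduct.map_tmul,
        LinearMap.id_apply]
      rw [Gsa_mul_pure, mul_one, Sinv_mul, Sinv_S, Sinv_Gsa]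
    | add u v hu hv => simp only [add_mul, map_add, hu, hv]
  | add u v hu hv =>
    simp only [TensorProduct.add_tmul, map_add, mul_add, hu, hv]

lemma Tel_Sinv (hS : Function.Bijective Q.S) (t : H) :
    TensorProduct.map LinearMap.id (Q.Sinv hS) (Q.Tel t)
    = (TensorProduct.map LinearMap.id (Q.qmap hS) Q.Phi) * Q.comul t := by
  rw [Tel_eq, TSinv]

lemma L2 {t : H} (hS : Function.Bijective Q.S)
    (ht : ∀ h : H, h * t = Q.counit h • t) (h : H) :
    Q.Mm (TensorProduct.map LinearMap.id (Q.Sinv hS) ((h ⊗ₜ[k] (1:H)) * Q.Tel t))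
    = t ⊗ₜ[k] h := by
  rw [mapSinv_mul, Tel_Sinv, ← mul_assoc, Mb, Mleft, R2, ← Algebra.TensorProduct.one_def,
    mul_one, int_comul_mul Q ht]

end QuasiHopfAlgebra
namespace QuasiHopfAlgebra
variable {k H : Type*} [Field k] [Ring H] [Algebra k H] (Q : QuasiHopfAlgebra k H)

lemma exists_dual {t : H} (h : t ≠ 0) : ∃ f : H →ₗ[k] k, f t = 1 := by
  have h2 : ¬ (∀ φ : Module.Dual k H, φ t = 0) := by
    rw [Module.forall_dual_apply_eq_zero_iff k t]
    exact h
  push_neg at h2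
  obtain ⟨φ, hφ⟩ := h2
  exact ⟨(φ t)⁻¹ • φ, by simp [LinearMap.smul_apply, smul_eq_mul, inv_mul_cancel₀ hφ]⟩

lemma counit_alpha_ne : Q.counit Q.alpha ≠ 0 := by
  intro hc
  have h1 := congrArg Q.counit Q.antipode_Phi
  rw [map_one] at h1
  have h2 : ∀ u : H ⊗[k] (H ⊗[k] H), Q.counit ((LinearMap.mul' k H)
      ((TensorProduct.map LinearMap.id
        ((LinearMap.mul' k H) ∘ₗ (TensorProduct.map
          ((LinearMap.mulRight k Q.alpha) ∘ₗ ((LinearMap.mulLeft k Q.beta) ∘ₗ Q.S))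
          LinearMap.id))) u)) = 0 := by
    intro u
    induction u using TensorProduct.induction_on with
    | zero => simp
    | tmul a w =>
      induction w using TensorProduct.induction_on with
      | zero => simp
      | tmul b c =>
        simp only [TensorProduct.map_tmul, LinearMap.id_apply, LinearMap.comp_apply,
          LinearMap.mulLeft_apply, LinearMap.mulRight_apply, LinearMap.mul'_apply]
        simp [map_mul, hc]
      | add u v hu hv => simp only [TensorProduct.tmul_add, map_add, hu, hv, add_zero]
    | add u v hu hv => simp only [map_add, hu, hv, add_zero]
  rw [h2] at h1
  exact one_ne_zero h1.symm

lemma counit_S (h : H) : Q.counit (Q.S h) = Q.counit h := by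
  have h1 := congrArg Q.counit (Q.antipode_left h)
  rw [map_smul, smul_eq_mul] at h1
  have key : ∀ u : H ⊗[k] H, Q.counit ((LinearMap.mul' k H)
      ((TensorProduct.map ((LinearMap.mulRight k Q.alpha) ∘ₗ Q.S) LinearMap.id) u))
      = (TensorProduct.lift (LinearMap.mk₂ k
          (fun b c => Q.counit (Q.S b) * Q.counit Q.alpha * Q.counit c)
          (fun b b' c => by simp [map_add, add_mul])
          (fun r b c => by simp only [map_smul, smul_eq_mul]; ring)
          (fun b c c' => by simp [map_add, mul_add])
          (fun r b c => by simp only [map_smul, smul_eq_mul]; ring))) u := by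
    intro u
    induction u using TensorProduct.induction_on with
    | zero => simp
    | tmul b c => simp [map_mul, mul_assoc]
    | add u v hu hv => simp only [map_add, hu, hv]
  rw [key] at h1
  have key2 : (TensorProduct.lift (LinearMap.mk₂ k
      (fun b c => Q.counit (Q.S b) * Q.counit Q.alpha * Q.counit c)
      (fun b b' c => by simp [map_add, add_mul])
      (fun r b c => by simp only [map_smul, smul_eq_mul]; ring)
      (fun b c c' => by simp [map_add, mul_add])
      (fun r b c => by simp only [map_smul, smul_eq_mul]; ring))) (Q.comul h)
      = Q.counit (Q.S h) * Q.counit Q.alpha := by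
    have conv : ∀ u : H ⊗[k] H, (TensorProduct.lift (LinearMap.mk₂ k
        (fun b c => Q.counit (Q.S b) * Q.counit Q.alpha * Q.counit c)
        (fun b b' c => by simp [map_add, add_mul])
        (fun r b c => by simp only [map_smul, smul_eq_mul]; ring)
        (fun b c c' => by simp [map_add, mul_add])
        (fun r b c => by simp only [map_smul, smul_eq_mul]; ring))) u
        = (TensorProduct.lift (LinearMap.mk₂ k
            (fun (b : H) (c : k) => c * (Q.counit (Q.S b) * Q.counit Q.alpha))
            (fun b b' c => by simp [map_add, add_mul, mul_add])
            (fun r b c => by simp only [map_smul, smul_eq_mul]; ring)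
            (fun b c c' => by simp [add_mul]
            )
            (fun r b c => by simp only [smul_eq_mul]; ring)))
          ((TensorProduct.map LinearMap.id Q.counit.toLinearMap) u) := by
      intro u
      induction u using TensorProduct.induction_on with
      | zero => simp
      | tmul b c =>
        simp only [TensorProduct.lift.tmul, LinearMap.mk₂_apply, TensorProduct.map_tmul,
          LinearMap.id_apply, AlgHom.toLinearMap_apply]
        ring
      | add u v hu hv => simp only [map_add, hu, hv]
    rw [conv]
    have h4 := Q.counit_right h
    rw [algMap_apply] at h4
    have h5 : (AlgHom.id k H).toLinearMap = (LinearMap.id : H →ₗ[k] H) := rfl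
    rw [h5] at h4
    rw [h4]
    simp
  rw [key2] at h1
  exact mul_right_cancel₀ Q.counit_alpha_ne h1

lemma mem_leftIntegrals_iff (t : H) :
    t ∈ Q.leftIntegrals ↔ ∀ h : H, h * t = Q.counit h • t := Iff.rfl

lemma mem_rightIntegrals_iff (t : H) :
    t ∈ Q.rightIntegrals ↔ ∀ h : H, t * h = Q.counit h • t := Iff.rfl

lemma fd_of_leftIntegral (hS : Function.Bijective Q.S) {t : H}
    (ht : ∀ h : H, h * t = Q.counit h • t) (hne : t ≠ 0) :
    FiniteDimensional k H := by
  classical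
  obtain ⟨f, hf⟩ := exists_dual (k := k) hne
  set b := Module.Basis.ofVectorSpace k H with hb
  set G : H ⊗[k] H →ₗ[k] (Module.Basis.ofVectorSpaceIndex k H →₀ H) :=
    (TensorProduct.finsuppScalarRight k k H (Module.Basis.ofVectorSpaceIndex k H)).toLinearMap ∘ₗ
      (TensorProduct.map LinearMap.id b.repr.toLinearMap) with hG
  set c : Module.Basis.ofVectorSpaceIndex k H →₀ H := G (Q.Tel t) with hc
  -- reconstruction
  have hT : Q.Tel t = ∑ j ∈ c.support, (c j) ⊗ₜ[k] b j := by
    have hinv : ∀ u : H ⊗[k] H,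
        (TensorProduct.map LinearMap.id b.repr.symm.toLinearMap)
          ((TensorProduct.finsuppScalarRight k k H
            (Module.Basis.ofVectorSpaceIndex k H)).symm.toLinearMap (G u)) = u := by
      intro u
      simp only [hG, LinearMap.comp_apply, LinearEquiv.coe_coe,
        LinearEquiv.symm_apply_apply]
      induction u using TensorProduct.induction_on with
      | zero => simp
      | tmul a x => simp
      | add u v hu hv => simp only [map_add, hu, hv]
    have hfix := hinv (Q.Tel t)
    rw [← hc] at hfix
    have hdecomp : (∑ j ∈ c.support, Finsupp.single j (c j)) = c := by
      conv_rhs => rw [← Finsupp.sum_single c]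
      rfl
    calc Q.Tel t
        = (TensorProduct.map LinearMap.id b.repr.symm.toLinearMap)
            ((TensorProduct.finsuppScalarRight k k H
              (Module.Basis.ofVectorSpaceIndex k H)).symm.toLinearMap c) := hfix.symm
      _ = ∑ j ∈ c.support, (TensorProduct.map LinearMap.id b.repr.symm.toLinearMap)
            ((TensorProduct.finsuppScalarRight k k H
              (Module.Basis.ofVectorSpaceIndex k H)).symm.toLinearMap
                (Finsupp.single j (c j))) := by
          conv_lhs => rw [← hdecomp]
          rw [map_sum, map_sum]
      _ = ∑ j ∈ c.support, (c j) ⊗ₜ[k] b j := by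
          apply Finset.sum_congr rfl
          intro j hj
          simp only [LinearEquiv.coe_coe]
          rw [TensorProduct.finsuppScalarRight_symm_apply_single]
          simp [Module.Basis.repr_symm_single_one]
  set V : Submodule k H := Submodule.span k (⇑c '' ↑c.support) with hV
  have hmem : ∀ j, c j ∈ V := by
    intro j
    by_cases hj : j ∈ c.support
    · exact Submodule.subset_span ⟨j, hj, rfl⟩
    · rw [Finsupp.notMem_support_iff.mp hj]
      exact V.zero_mem
  haveI hVfd : FiniteDimensional k V :=
    FiniteDimensional.span_of_finite k ((c.support.finite_toSet).image _)
  -- coordinate functionals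
  have leftIdeal : ∀ (h : H) (j : Module.Basis.ofVectorSpaceIndex k H), h * c j ∈ V := by
    intro h j
    set Cj : H ⊗[k] H →ₗ[k] H := TensorProduct.lift (LinearMap.mk₂ k
      (fun a x => ((b.repr x) j) • a)
      (fun a a' x => by simp [smul_add])
      (fun r a x => by simp [smul_comm r])
      (fun a x x' => by simp [map_add, Finsupp.add_apply, add_smul])
      (fun r a x => by simp [map_smul, Finsupp.smul_apply, smul_smul, mul_comm]))
      with hCj
    have hCj_tmul : ∀ (a x : H), Cj (a ⊗ₜ[k] x) = ((b.repr x) j) • a := fun a x => rfl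
    have compute1 : Cj ((h ⊗ₜ[k] (1:H)) * Q.Tel t) = h * c j := by
      rw [hT, Finset.mul_sum, map_sum]
      have hterm : ∀ i ∈ c.support, Cj ((h ⊗ₜ[k] (1:H)) * ((c i) ⊗ₜ[k] b i))
          = ((b.repr (b i)) j) • (h * c i) := by
        intro i _
        rw [Algebra.TensorProduct.tmul_mul_tmul, one_mul, hCj_tmul]
      rw [Finset.sum_congr rfl hterm]
      by_cases hj : j ∈ c.support
      · rw [Finset.sum_eq_single j]
        · simp [Module.Basis.repr_self]
        · intro i _ hij
          simp [Module.Basis.repr_self, Finsupp.single_apply, hij]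
        · intro hnj
          exact absurd hj hnj
      · rw [Finsupp.notMem_support_iff.mp hj, mul_zero]
        apply Finset.sum_eq_zero
        intro i hi
        have hij : i ≠ j := fun hij => hj (hij ▸ hi)
        simp [Module.Basis.repr_self, Finsupp.single_apply, hij]
    have compute2 : Cj (Q.Tel t * ((1:H) ⊗ₜ[k] h)) ∈ V := by
      rw [hT, Finset.sum_mul, map_sum]
      have hterm : ∀ i ∈ c.support, Cj (((c i) ⊗ₜ[k] b i) * ((1:H) ⊗ₜ[k] h))
          = ((b.repr (b i * h)) j) • c i := by
        intro i _
        rw [Algebra.TensorProduct.tmul_mul_tmul, mul_one, hCj_tmul]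
      rw [Finset.sum_congr rfl hterm]
      exact Submodule.sum_smul_mem V _ (fun i _ => hmem i)
    rw [← compute1, Q.L1 ht h]
    exact compute2
  -- the injection
  set J : H →ₗ[k] (↥c.support → V) := LinearMap.pi (fun i =>
    LinearMap.codRestrict V (LinearMap.mulRight k (c i)) (fun h => leftIdeal h i))
    with hJ
  have hJinj : Function.Injective J := by
    intro h h' hhh
    have hcomp : ∀ i ∈ c.support, h * c i = h' * c i := by
      intro i hi
      have := congrFun hhh ⟨i, hi⟩
      exact congrArg Subtype.val this
    have hTh : (h ⊗ₜ[k] (1:H)) * Q.Tel t = (h' ⊗ₜ[k] (1:H)) * Q.Tel t := by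
      rw [hT, Finset.mul_sum, Finset.mul_sum]
      apply Finset.sum_congr rfl
      intro i hi
      rw [Algebra.TensorProduct.tmul_mul_tmul, Algebra.TensorProduct.tmul_mul_tmul,
        hcomp i hi]
    have h2 := congrArg (fun u => Q.Mm (TensorProduct.map LinearMap.id (Q.Sinv hS) u)) hTh
    rw [Q.L2 hS ht h, Q.L2 hS ht h'] at h2
    have h3 := congrArg (TensorProduct.lift (LinearMap.mk₂ k
      (fun (a x : H) => f a • x)
      (fun a a' x => by simp [map_add, add_smul])
      (fun r a x => by simp [map_smul, smul_smul, smul_eq_mul])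
      (fun a x x' => by simp [smul_add])
      (fun r a x => by simp [smul_comm r]))) h2
    simpa [TensorProduct.lift.tmul, hf] using h3
  exact FiniteDimensional.of_injective J hJinj

end QuasiHopfAlgebra
/-- an infinite dimensional quasi-Hopf algebra with bijective antipode
has no non-zero left or right integrals. -/
theorem integrals_eq_bot_of_infiniteDimensional {k H : Type*} [Field k]
    [Ring H] [Algebra k H] (Q : QuasiHopfAlgebra k H)
    (hS : Function.Bijective Q.S) (hfd : ¬ FiniteDimensional k H) :
    Q.leftIntegrals = ⊥ ∧ Q.rightIntegrals = ⊥ := by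
  have hleft : Q.leftIntegrals = ⊥ := by
    rw [eq_bot_iff]
    intro t htI
    rw [Submodule.mem_bot]
    by_contra hne
    exact hfd (Q.fd_of_leftIntegral hS ((Q.mem_leftIntegrals_iff t).mp htI) hne)
  refine ⟨hleft, ?_⟩
  rw [eq_bot_iff]
  intro t htI
  rw [Submodule.mem_bot]
  have htI' := (Q.mem_rightIntegrals_iff t).mp htI
  have ht' : ∀ h : H, h * Q.Sinv hS t = Q.counit h • Q.Sinv hS t := by
    intro h
    calc h * Q.Sinv hS t
        = Q.Sinv hS (Q.S h) * Q.Sinv hS t := by rw [Q.Sinv_S]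
      _ = Q.Sinv hS (t * Q.S h) := (Q.Sinv_mul hS _ _).symm
      _ = Q.Sinv hS (Q.counit (Q.S h) • t) := by rw [htI' (Q.S h)]
      _ = Q.counit (Q.S h) • Q.Sinv hS t := by rw [map_smul]
      _ = Q.counit h • Q.Sinv hS t := by rw [Q.counit_S]
  have hmem : Q.Sinv hS t ∈ Q.leftIntegrals := (Q.mem_leftIntegrals_iff _).mpr ht'
  rw [hleft, Submodule.mem_bot] at hmem
  have : t = Q.S (Q.Sinv hS t) := (Q.S_Sinv hS t).symm
  rw [this, hmem, map_zero]
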